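/- arXiv:2304.05310 — 6 statements merged into one kernel-verified Lean document; each statement's English description precedes it below -/
import Mathlib

section
/- Let F : ℝⁿ → ℝⁿ be continuous and T > 0. Define G(x) = (1/T)·(F(x) − x). Consider the delay differential equation h'(t) = G(h(t−τ)) for t ≥ 0 with constant initial function h(t) = x for t ≤ 0, and delay τ = T. Then for every x, the solution satisfies h(T) = F(x); i.e., the NDDE flow at time T exactly represents the map F. -/
/-- With delay τ = T and constant initial function `x`, the NDDE
`h'(t) = G(h(t−T))`, `G(x) = (1/T)•(F(x) − x)`, satisfies `h(T) = F(x)`. -/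
theorem ndde_represents_F {n : ℕ}
    (F : EuclideanSpace ℝ (Fin n) → EuclideanSpace ℝ (Fin n)) (hF : Continuous F)
    (T : ℝ) (hT : 0 < T)
    (G : EuclideanSpace ℝ (Fin n) → EuclideanSpace ℝ (Fin n))
    (hG : ∀ x, G x = (1 / T) • (F x - x))
    (h : EuclideanSpace ℝ (Fin n) → ℝ → EuclideanSpace ℝ (Fin n))
    (hist : ∀ x, ∀ t ≤ (0 : ℝ), h x t = x)
    (hdde : ∀ x, ∀ t ∈ Set.Ici (0 : ℝ),
      HasDerivWithinAt (h x) (G (h x (t - T))) (Set.Ici 0) t) :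
    ∀ x, h x T = F x := by
  intro x
  -- On [0, T], the delayed argument is ≤ 0, so h x (t - T) = x.
  have hderiv : ∀ t ∈ Set.Icc (0 : ℝ) T, HasDerivWithinAt (h x) (G x) (Set.Ici 0) t := by
    intro t ht
    have : h x (t - T) = x := hist x _ (by linarith [ht.2])
    simpa [this] using hdde x t ht.1
  set f : ℝ → EuclideanSpace ℝ (Fin n) := fun t => h x t - t • G x with hf
  have hfd : ∀ t ∈ Set.Ico (0 : ℝ) T, HasDerivWithinAt f 0 (Set.Ici t) t := by
    intro t ht
    have h1 : HasDerivWithinAt (h x) (G x) (Set.Ici t) t :=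
      (hderiv t ⟨ht.1, ht.2.le⟩).mono (Set.Ici_subset_Ici.2 ht.1)
    have h2 : HasDerivWithinAt (fun s : ℝ => s • G x) (G x) (Set.Ici t) t := by
      simpa using (hasDerivWithinAt_id t (Set.Ici t)).smul_const (G x)
    have h3 := h1.sub h2
    rw [sub_self] at h3
    exact h3
  have hfc : ContinuousOn f (Set.Icc 0 T) := by
    have : ContinuousOn (h x) (Set.Icc 0 T) := fun t ht =>
      ((hderiv t ht).continuousWithinAt).mono (fun s hs => hs.1)
    exact this.sub ((continuousOn_id.smul continuousOn_const))
  have key := constant_of_has_deriv_right_zero hfc hfd T ⟨le_of_lt hT, le_refl T⟩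
  have h0 : h x 0 = x := hist x 0 le_rfl
  have : h x T - T • G x = x := by simpa [hf, h0] using key
  have : h x T = x + T • G x := by
    have := congrArg (· + T • G x) this
    simpa [sub_add_cancel] using this
  rw [this, hG]
  rw [smul_smul]
  field_simp
  simp
end

section
/- Fix 0 < r₁ < r₂ < r₃ and set r = (r₁ + r₂)/2. Consider the DDE in ℝᵈ (d ≥ 1): h₁'(t) = ‖h(t−τ)‖ − r, hᵢ'(t) = 0 for i ≥ 2, t ≥ 0, with constant initial function h(t) = x for t ≤ 0, and terminal time T = τ. Then h₁(T) = x₁ + T·(‖x‖ − r). Consequently, for T sufficiently large, the map x ↦ h(T) sends the set {‖x‖ ≤ r₁} and the set {r₂ ≤ ‖x‖ ≤ r₃} to two sets that are separated by the hyperplane {y : y₁ = c} for some constant c; specifically for T > (r₃ + r₁)/ (r − r₁) · 1 one can take any c with sup over the inner ball of h₁(T) < c < inf over the annulus of h₁(T). -/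
/-- For the DDE `h₁' = ‖h(t−τ)‖ − r`, `hᵢ' = 0 (i ≥ 2)` with constant
history `x` and `τ = T`, one has `h₁(T) = x₁ + T(‖x‖ − r)`; and for
`T > (r₃+r₁)/(r−r₁)` the images of the inner ball and the annulus are separated by
a hyperplane `{y : y₁ = c}`. -/
theorem ndde_separates_ball_and_annulus {d : ℕ} (hd : 0 < d)
    (r₁ r₂ r₃ r τ T : ℝ)
    (h01 : 0 < r₁) (h12 : r₁ < r₂) (h23 : r₂ < r₃)
    (hr : r = (r₁ + r₂) / 2) (hτT : τ = T) (hT : 0 < T)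
    (h : EuclideanSpace ℝ (Fin d) → ℝ → EuclideanSpace ℝ (Fin d))
    (hist : ∀ x, ∀ t ≤ (0 : ℝ), h x t = x)
    (hdde : ∀ x, ∀ t ∈ Set.Ici (0 : ℝ),
      HasDerivWithinAt (h x)
        ((WithLp.toLp 2 (fun i => if i = (⟨0, hd⟩ : Fin d) then ‖h x (t - τ)‖ - r else 0) :
          EuclideanSpace ℝ (Fin d)))
        (Set.Ici 0) t) :
    (∀ x, h x T ⟨0, hd⟩ = x ⟨0, hd⟩ + T * (‖x‖ - r)) ∧
    (T > (r₃ + r₁) / (r - r₁) →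
      ∃ c : ℝ,
        (∀ x : EuclideanSpace ℝ (Fin d), ‖x‖ ≤ r₁ → h x T ⟨0, hd⟩ < c) ∧
        (∀ x : EuclideanSpace ℝ (Fin d), r₂ ≤ ‖x‖ → ‖x‖ ≤ r₃ → c < h x T ⟨0, hd⟩)) := by
  set i0 : Fin d := ⟨0, hd⟩
  have coord_abs : ∀ (x : EuclideanSpace ℝ (Fin d)), |x i0| ≤ ‖x‖ := by
    intro x
    have h1 : inner ℝ (EuclideanSpace.single i0 (1:ℝ)) x = x i0 := by
      rw [EuclideanSpace.inner_single_left]; simp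
    have h2 := abs_real_inner_le_norm (EuclideanSpace.single i0 (1:ℝ)) x
    rwa [h1, EuclideanSpace.norm_single, norm_one, one_mul] at h2
  have key : ∀ x, h x T i0 = x i0 + T * (‖x‖ - r) := by
    intro x
    set L : EuclideanSpace ℝ (Fin d) →L[ℝ] ℝ := EuclideanSpace.proj i0
    -- g t := L (h x t) - (‖x‖ - r) * t has zero derivative on [0,T]
    have hderiv : ∀ t ∈ Set.Icc (0:ℝ) T,
        HasDerivWithinAt (fun t => L (h x t) - (‖x‖ - r) * t) 0 (Set.Icc 0 T) t := by
      intro t ht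
      have h1 : HasDerivWithinAt (h x)
          ((WithLp.toLp 2 (fun i => if i = i0 then ‖h x (t - τ)‖ - r else 0) : EuclideanSpace ℝ (Fin d)))
          (Set.Icc 0 T) t :=
        (hdde x t ht.1).mono (fun s hs => hs.1)
      have h2 := L.hasFDerivAt.comp_hasDerivWithinAt t h1
      have hval : L ((WithLp.toLp 2 (fun i => if i = i0 then ‖h x (t - τ)‖ - r else 0) :
          EuclideanSpace ℝ (Fin d))) = ‖x‖ - r := by
        have : h x (t - τ) = x := hist x (t - τ) (by rw [hτT]; linarith [ht.2])
        simp [L, PiLp.proj_apply, this]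
      rw [hval] at h2
      have h3 : HasDerivWithinAt (fun t : ℝ => (‖x‖ - r) * t) (‖x‖ - r) (Set.Icc 0 T) t :=
        ((hasDerivAt_id t).const_mul (‖x‖ - r)).hasDerivWithinAt.congr_deriv (by ring)
      exact (h2.sub h3).congr_deriv (sub_self _)
    have := (convex_Icc (0:ℝ) T).norm_image_sub_le_of_norm_hasDerivWithin_le (C := 0)
      hderiv (fun t ht => by simp) (Set.left_mem_Icc.2 hT.le)
      (Set.right_mem_Icc.2 hT.le)
    simp only [zero_mul, norm_le_zero_iff, sub_eq_zero] at this
    have h0 : h x 0 = x := hist x 0 le_rfl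
    have hL : L (h x T) - (‖x‖ - r) * T = L (h x 0) - (‖x‖ - r) * 0 := this
    rw [h0] at hL
    have : L (h x T) = L x + T * (‖x‖ - r) := by
      rw [mul_zero, sub_zero] at hL; linarith [hL]
    simpa [L, PiLp.proj_apply] using this
  refine ⟨key, fun hTbig => ?_⟩
  have hrr1 : r - r₁ = (r₂ - r₁) / 2 := by rw [hr]; ring
  have hpos : 0 < r - r₁ := by rw [hrr1]; linarith
  have hTr : r₃ + r₁ < T * (r - r₁) := by
    have := (div_lt_iff₀ hpos).mp hTbig
    linarith
  refine ⟨(r₁ - r₃) / 2, ?_, ?_⟩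
  · intro x hx
    have hx0 : x i0 ≤ r₁ := by
      have := coord_abs x
      linarith [abs_le.mp this |>.2]
    rw [key x]
    have : T * (‖x‖ - r) ≤ T * (r₁ - r) := by
      apply mul_le_mul_of_nonneg_left _ hT.le; linarith
    nlinarith
  · intro x hx2 hx3
    have hx0 : -r₃ ≤ x i0 := by
      have := coord_abs x
      linarith [abs_le.mp this |>.1]
    rw [key x]
    have hr2 : r₂ - r = r - r₁ := by rw [hr]; ring
    have : T * (r₂ - r) ≤ T * (‖x‖ - r) := by
      apply mul_le_mul_of_nonneg_left _ hT.le; linarith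
    nlinarith
end

section
/- Let 0 < r₁ < r₂ < r₃ and g : ℝᵈ → ℝ with g(x) = 1 for ‖x‖ ≤ r₁ and g(x) = −1 for r₂ ≤ ‖x‖ ≤ r₃. There is no Lipschitz vector field f : ℝᵈ × ℝ → ℝᵈ, time T > 0, and continuous linear functional ℓ : ℝᵈ → ℝ plus constant b, such that ℓ(Φ_T(x)) + b has the same sign as g(x) on the domain of g, when d = 1. -/
/-- d = 1: No Lipschitz vector field `f`, time `T > 0`, and affine
readout `x ↦ a·x + b` can make `a·Φ_T(x) + b` have the same sign as the function
`g` which is `+1` on `|x| ≤ r₁` and `−1` on `r₂ ≤ |x| ≤ r₃`. -/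
theorem no_ode_affine_readout_represents_g
    (r₁ r₂ r₃ : ℝ) (h01 : 0 < r₁) (h12 : r₁ < r₂) (h23 : r₂ < r₃)
    (f : ℝ → ℝ → ℝ) (K : NNReal) (hLip : ∀ t, LipschitzWith K fun x => f x t)
    (hcont : ∀ x, Continuous (f x))
    (T : ℝ) (hT : 0 < T)
    (sol : ℝ → ℝ → ℝ) (hinit : ∀ x₀, sol x₀ 0 = x₀)
    (hsol : ∀ x₀, ∀ t ∈ Set.Icc 0 T,
      HasDerivWithinAt (sol x₀) (f (sol x₀ t) t) (Set.Icc 0 T) t)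
    (a b : ℝ)
    (hsep : ∀ x : ℝ, (|x| ≤ r₁ → 0 < a * sol x T + b) ∧
      (r₂ ≤ |x| → |x| ≤ r₃ → a * sol x T + b < 0)) :
    False := by
  -- continuity of each solution on [0,T]
  have hcontsol : ∀ x₀, ContinuousOn (sol x₀) (Set.Icc 0 T) := fun x₀ t ht =>
    (hsol x₀ t ht).continuousWithinAt
  -- order preservation of the time-T flow
  have mono : ∀ x y : ℝ, x < y → sol x T < sol y T := by
    intro x y hxy
    by_contra hle
    push_neg at hle
    -- IVT: solutions meet at some t₀ ∈ [0,T]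
    have hcx := hcontsol x
    have hcy := hcontsol y
    have hdiff : ContinuousOn (fun t => sol y t - sol x t) (Set.Icc 0 T) :=
      hcy.sub hcx
    have h0 : (0:ℝ) ∈ Set.Icc (sol y T - sol x T) (sol y 0 - sol x 0) := by
      constructor
      · linarith
      · rw [hinit, hinit]; linarith
    obtain ⟨t₀, ht₀, heq⟩ := intermediate_value_Icc' hT.le hdiff h0
    have heq2 : sol y t₀ - sol x t₀ = 0 := heq
    have hmeet : sol x t₀ = sol y t₀ := by linarith
    have ht₀pos : 0 < t₀ := by
      rcases eq_or_lt_of_le ht₀.1 with h | h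
      · exfalso
        have := hmeet
        rw [← h, hinit, hinit] at this
        linarith
      · exact h
    -- backward uniqueness on [0, t₀]
    have key : Set.EqOn (sol x) (sol y) (Set.Icc 0 t₀) := by
      have hsub : Set.Icc 0 t₀ ⊆ Set.Icc 0 T := Set.Icc_subset_Icc_right ht₀.2
      have hderiv : ∀ z : ℝ, ∀ t ∈ Set.Ioc (0:ℝ) t₀,
          HasDerivWithinAt (sol z) (f (sol z t) t) (Set.Iic t) t := by
        intro z t ht
        have h1 : HasDerivWithinAt (sol z) (f (sol z t) t) (Set.Icc 0 t) t :=
          ((hsol z t ⟨ht.1.le, ht.2.trans ht₀.2⟩).mono (Set.Icc_subset_Icc_right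
            (ht.2.trans ht₀.2)))
        refine h1.mono_of_mem_nhdsWithin ?_
        have : Set.Icc (0:ℝ) t = Set.Iic t ∩ Set.Ici 0 := by
          ext u; simp [Set.mem_Icc, and_comm]
        rw [this]
        exact Filter.inter_mem self_mem_nhdsWithin
          (mem_nhdsWithin_of_mem_nhds (Ici_mem_nhds ht.1))
      exact ODE_solution_unique_of_mem_Icc_left (v := fun t z => f z t)
        (s := fun _ => Set.univ)
        (fun t _ => (hLip t).lipschitzOnWith)
        ((hcontsol x).mono hsub) (fun t ht => hderiv x t ht)
        (fun _ _ => Set.mem_univ _)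
        ((hcontsol y).mono hsub) (fun t ht => hderiv y t ht)
        (fun _ _ => Set.mem_univ _) hmeet
    have : x = y := by
      have := key (Set.left_mem_Icc.2 ht₀pos.le)
      rwa [hinit, hinit] at this
    exact absurd this hxy.ne
  -- sign conditions
  have p0 : 0 < a * sol 0 T + b := (hsep 0).1 (by simp [h01.le])
  have pp : a * sol r₂ T + b < 0 :=
    (hsep r₂).2 (by rw [abs_of_pos (h01.trans h12)]) (by rw [abs_of_pos (h01.trans h12)]; exact h23.le)
  have pm : a * sol (-r₂) T + b < 0 :=
    (hsep (-r₂)).2 (by rw [abs_neg, abs_of_pos (h01.trans h12)])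
      (by rw [abs_neg, abs_of_pos (h01.trans h12)]; exact h23.le)
  have m1 : sol (-r₂) T < sol 0 T := mono _ _ (by linarith)
  have m2 : sol 0 T < sol r₂ T := mono _ _ (by linarith)
  rcases le_total a 0 with ha | ha
  · nlinarith [mul_le_mul_of_nonpos_left m1.le ha]
  · nlinarith [mul_le_mul_of_nonneg_left m2.le ha]
end

section
/- Let f : ℝⁿ × ℝⁿ → ℝⁿ be bounded and Lipschitz in both arguments, τ > 0, and φ : [−τ, 0] → ℝⁿ continuous. Then the DDE h'(t) = f(h(t), h(t−τ)) with initial function h = φ on [−τ, 0] has a unique solution on [0, ∞), constructed by the method of steps: on each interval [kτ, (k+1)τ] the equation reduces to an ODE with known continuous forcing h(t−τ). -/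
open Set Metric Filter Topology

section DDEaux

variable {E : Type*} [NormedAddCommGroup E] [NormedSpace ℝ E]

private lemma dde_hasDerivWithinAt_singleton (f : ℝ → E) (c : E) (x : ℝ) :
    HasDerivWithinAt f c {x} x := by
  rw [hasDerivWithinAt_iff_isLittleO, nhdsWithin_singleton, Asymptotics.isLittleO_pure]
  simp

private lemma dde_hasDerivWithinAt_nmem {f : ℝ → E} {c : E} {s : Set ℝ} {x : ℝ}
    (h : x ∉ closure s) : HasDerivWithinAt f c s x :=
  HasFDerivWithinAt.of_notMem_closure h

private lemma dde_lip_left {f : E → E → E} {K : NNReal}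
    (hLip : LipschitzWith K fun p : E × E => f p.1 p.2) (c : E) :
    LipschitzWith K (fun y => f y c) := by
  refine LipschitzWith.of_dist_le_mul fun y z => ?_
  simpa only [Prod.dist_eq, dist_self, max_eq_left dist_nonneg] using
    hLip.dist_le_mul (y, c) (z, c)

private lemma dde_lip_right {f : E → E → E} {K : NNReal}
    (hLip : LipschitzWith K fun p : E × E => f p.1 p.2) (x : E) :
    LipschitzWith K (fun c => f x c) := by
  refine LipschitzWith.of_dist_le_mul fun y z => ?_
  simpa only [Prod.dist_eq, dist_self, max_eq_right dist_nonneg] using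
    hLip.dist_le_mul (x, y) (x, z)

/-- `H` is a solution of the DDE up to time `b`. -/
def DDEgood (f : E → E → E) (τ : ℝ) (φ : ℝ → E) (b : ℝ) (H : ℝ → E) : Prop :=
  (∀ t ∈ Icc (-τ) 0, H t = φ t) ∧ ContinuousOn H (Icc (-τ) b) ∧
    ∀ t ∈ Icc 0 b, HasDerivWithinAt H (f (H t) (H (t - τ))) (Icc 0 b) t

private lemma DDEgood_base {f : E → E → E} {τ : ℝ} (hτ : 0 < τ) {φ : ℝ → E}
    (hφ : ContinuousOn φ (Icc (-τ) 0)) : ∃ H, DDEgood f τ φ 0 H := by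
  have hle : (-τ : ℝ) ≤ 0 := by linarith
  refine ⟨fun t => φ (projIcc (-τ) 0 hle t), fun t ht => by show φ (projIcc (-τ) 0 hle t : ℝ) = φ t; rw [projIcc_of_mem hle ht], ?_, ?_⟩
  · exact hφ.comp (continuous_subtype_val.comp (continuous_projIcc)).continuousOn
      (fun t _ => (projIcc (-τ) 0 hle t).2)
  · intro t ht
    rw [Icc_self] at ht ⊢
    rw [mem_singleton_iff] at ht; subst ht
    exact dde_hasDerivWithinAt_singleton _ _ _

private lemma DDEgood_step [CompleteSpace E] {f : E → E → E} {K : NNReal}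
    (hLip : LipschitzWith K fun p : E × E => f p.1 p.2)
    {C : ℝ} (hbdd : ∀ u v, ‖f u v‖ ≤ C)
    {τ : ℝ} (hτ : 0 < τ) {φ : ℝ → E}
    (a : ℝ) (ha : 0 ≤ a) (H : ℝ → E) (hH : DDEgood f τ φ a H) :
    ∃ H', (∀ t, t ≤ a → H' t = H t) ∧ DDEgood f τ φ (a + τ) H' := by
  have hC : 0 ≤ C := le_trans (norm_nonneg _) (hbdd 0 0)
  have hmaps : MapsTo (fun t => t - τ) (Icc a (a + τ)) (Icc (-τ) a) := by
    intro t ht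
    have h1 := ht.1
    have h2 := ht.2
    constructor
    · show -τ ≤ t - τ; linarith
    · show t - τ ≤ a; linarith
  have hpl : IsPicardLindelof (fun t y => f y (H (t - τ))) (tmin := a) (tmax := a + τ)
      ⟨a, le_refl a, by linarith⟩ (H a) (C * τ).toNNReal 0 C.toNNReal K :=
    { lipschitzOnWith := fun t _ => (dde_lip_left hLip _).lipschitzOnWith
      continuousOn := fun x _ => by
        exact (dde_lip_right hLip x).continuous.comp_continuousOn
          (hH.2.1.comp ((continuous_sub_right τ).continuousOn) hmaps)
      norm_le := fun t _ x _ => (hbdd _ _).trans (Real.le_coe_toNNReal C)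
      mul_max_le := by
        have hm : max (a + τ - a) (a - a) = τ := by rw [add_sub_cancel_left, sub_self, max_eq_left hτ.le]
        simp [hm, Real.coe_toNNReal _ hC, Real.coe_toNNReal _ (mul_nonneg hC hτ.le), max_eq_left hτ.le] }
  obtain ⟨α, hα0, hαd⟩ : ∃ α : ℝ → E, α a = H a ∧ ∀ t ∈ Icc a (a + τ),
      HasDerivWithinAt α (f (α t) (H (t - τ))) (Icc a (a + τ)) t :=
    hpl.exists_eq_forall_mem_Icc_hasDerivWithinAt₀
  classical
  set H' : ℝ → E := fun t => if t ≤ a then H t else α t with hH'def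
  have eqH : ∀ t, t ≤ a → H' t = H t := fun t ht => if_pos ht
  have eqα : ∀ t ∈ Icc a (a + τ), H' t = α t := by
    intro t ht
    by_cases h : t ≤ a
    · have hta : t = a := le_antisymm h ht.1
      subst hta
      rw [eqH t le_rfl, hα0]
    · exact if_neg h
  refine ⟨H', eqH, fun t ht => (eqH t (le_trans ht.2 ha)).trans (hH.1 t ht), ?_, ?_⟩
  · -- continuity
    have hu : Icc (-τ) a ∪ Icc a (a + τ) = Icc (-τ) (a + τ) :=
      Icc_union_Icc_eq_Icc (by linarith) (by linarith)
    rw [← hu]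
    intro x hx
    have c1 : ContinuousWithinAt H' (Icc (-τ) a) x := by
      by_cases hx1 : x ∈ Icc (-τ) a
      · exact ((hH.2.1 x hx1).congr (fun y hy => eqH y hy.2) (eqH x hx1.2))
      · exact continuousWithinAt_of_notMem_closure (by rwa [isClosed_Icc.closure_eq])
    have c2 : ContinuousWithinAt H' (Icc a (a + τ)) x := by
      by_cases hx2 : x ∈ Icc a (a + τ)
      · exact ((hαd x hx2).continuousWithinAt.congr (fun y hy => eqα y hy) (eqα x hx2))
      · exact continuousWithinAt_of_notMem_closure (by rwa [isClosed_Icc.closure_eq])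
    exact c1.union c2
  · -- derivative
    have hu2 : Icc (0 : ℝ) a ∪ Icc a (a + τ) = Icc 0 (a + τ) :=
      Icc_union_Icc_eq_Icc ha (by linarith)
    rw [← hu2]
    intro t ht
    have dL : t ∈ Icc 0 a → HasDerivWithinAt H' (f (H' t) (H' (t - τ))) (Icc 0 a) t := by
      intro ht1
      have h1 : H' t = H t := eqH t ht1.2
      have h2 : H' (t - τ) = H (t - τ) := eqH _ (by have := ht1.2; linarith)
      rw [h1, h2]
      exact (hH.2.2 t ht1).congr (fun y hy => eqH y hy.2) h1
    have dR : t ∈ Icc a (a + τ) → HasDerivWithinAt H' (f (H' t) (H' (t - τ))) (Icc a (a + τ)) t := by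
      intro ht2
      have h1 : H' t = α t := eqα t ht2
      have h2 : H' (t - τ) = H (t - τ) := eqH _ (by have := ht2.2; linarith)
      rw [h1, h2]
      exact (hαd t ht2).congr (fun y hy => eqα y hy) h1
    rcases ht with ht1 | ht2
    · refine (dL ht1).union ?_
      by_cases hta : t ∈ Icc a (a + τ)
      · exact dR hta
      · exact dde_hasDerivWithinAt_nmem (by rwa [isClosed_Icc.closure_eq])
    · refine HasDerivWithinAt.union ?_ (dR ht2)
      by_cases hta : t ∈ Icc 0 a
      · exact dL hta
      · exact dde_hasDerivWithinAt_nmem (by rwa [isClosed_Icc.closure_eq])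

end DDEaux

/-- Existence and uniqueness (method of steps) for the DDE
`h'(t) = f(h(t), h(t−τ))` with bounded Lipschitz `f` and continuous initial
function `φ` on `[−τ, 0]`: there is a unique solution on `[−τ, ∞)`. -/
theorem dde_exists_unique {d : ℕ}
    (f : EuclideanSpace ℝ (Fin d) → EuclideanSpace ℝ (Fin d) → EuclideanSpace ℝ (Fin d))
    (K : NNReal)
    (hLip : LipschitzWith K fun p : EuclideanSpace ℝ (Fin d) × EuclideanSpace ℝ (Fin d) =>
      f p.1 p.2)
    (C : ℝ) (hbdd : ∀ u v, ‖f u v‖ ≤ C)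
    (τ : ℝ) (hτ : 0 < τ)
    (φ : ℝ → EuclideanSpace ℝ (Fin d)) (hφ : ContinuousOn φ (Set.Icc (-τ) 0)) :
    ∃ h : ℝ → EuclideanSpace ℝ (Fin d),
      ((∀ t ∈ Set.Icc (-τ) 0, h t = φ t) ∧
        ContinuousOn h (Set.Ici (-τ)) ∧
        ∀ t ∈ Set.Ici (0 : ℝ),
          HasDerivWithinAt h (f (h t) (h (t - τ))) (Set.Ici 0) t) ∧
      ∀ g : ℝ → EuclideanSpace ℝ (Fin d),
        ((∀ t ∈ Set.Icc (-τ) 0, g t = φ t) ∧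
          ContinuousOn g (Set.Ici (-τ)) ∧
          ∀ t ∈ Set.Ici (0 : ℝ),
            HasDerivWithinAt g (f (g t) (g (t - τ))) (Set.Ici 0) t) →
        ∀ t ∈ Set.Ici (-τ), g t = h t := by
  classical
  obtain ⟨H0, hH0⟩ := DDEgood_base (f := f) hτ hφ
  choose F hF1 hF2 using DDEgood_step hLip hbdd hτ (φ := φ)
  let b : ℕ → ℝ := fun k => Nat.rec 0 (fun _ x => x + τ) k
  have hb0 : ∀ k, 0 ≤ b k := by
    intro k
    induction k with
    | zero => exact le_refl 0
    | succ n ih => show 0 ≤ b n + τ; linarith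
  have hbk : ∀ k : ℕ, b k = (k : ℝ) * τ := by
    intro k
    induction k with
    | zero => show (0 : ℝ) = ((0:ℕ) : ℝ) * τ; simp
    | succ n ih => show b n + τ = _ ; rw [ih]; push_cast; ring
  let G : (k : ℕ) → {H : ℝ → EuclideanSpace ℝ (Fin d) // DDEgood f τ φ (b k) H} := fun k =>
    Nat.rec (motive := fun k => {H : ℝ → EuclideanSpace ℝ (Fin d) // DDEgood f τ φ (b k) H}) ⟨H0, hH0⟩
      (fun n p => ⟨F (b n) (hb0 n) p.1 p.2, hF2 (b n) (hb0 n) p.1 p.2⟩) k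
  have hGs : ∀ k, ∀ t, t ≤ b k → (G (k + 1)).1 t = (G k).1 t := fun k =>
    hF1 (b k) (hb0 k) (G k).1 (G k).2
  have hbmono : ∀ {k m : ℕ}, k ≤ m → b k ≤ b m := by
    intro k m h
    rw [hbk, hbk]
    exact mul_le_mul_of_nonneg_right (by exact_mod_cast h) hτ.le
  have agree : ∀ k m, k ≤ m → ∀ t, t ≤ b k → (G m).1 t = (G k).1 t := by
    intro k m hkm
    induction m, hkm using Nat.le_induction with
    | base => intro t _; rfl
    | succ m hkm ih =>
      intro t ht
      rw [hGs m t (le_trans ht (hbmono hkm)), ih t ht]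
  let idx : ℝ → ℕ := fun t => ⌊t / τ⌋₊ + 1
  have hidx : ∀ t, t < b (idx t) := by
    intro t
    have h1 : t / τ < ((⌊t / τ⌋₊ + 1 : ℕ) : ℝ) := by
      push_cast
      exact Nat.lt_floor_add_one _
    have h2 : t < ((⌊t / τ⌋₊ + 1 : ℕ) : ℝ) * τ := by
      calc t = t / τ * τ := by field_simp
        _ < _ := mul_lt_mul_of_pos_right h1 hτ
    exact lt_of_lt_of_eq h2 (hbk (idx t)).symm
  let h : ℝ → EuclideanSpace ℝ (Fin d) := fun t => (G (idx t)).1 t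
  have hagr : ∀ (m : ℕ) (t : ℝ), t ≤ b m → h t = (G m).1 t := by
    intro m t ht
    rcases le_total (idx t) m with hc | hc
    · exact (agree (idx t) m hc t (hidx t).le).symm
    · exact agree m (idx t) hc t ht
  have hsol1 : ∀ t ∈ Icc (-τ) 0, h t = φ t := by
    intro t ht
    rw [hagr 0 t ht.2]
    exact (G 0).2.1 t ht
  have hsol2 : ContinuousOn h (Ici (-τ)) := by
    intro t ht
    have h1 : t < b (idx t) := hidx t
    have hmem : Icc (-τ) (b (idx t)) ∈ 𝓝[Ici (-τ)] t := by
      refine mem_nhdsWithin.mpr ⟨Iio (b (idx t)), isOpen_Iio, h1, ?_⟩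
      rintro x ⟨hx1, hx2⟩
      exact ⟨hx2, le_of_lt hx1⟩
    have hev : h =ᶠ[𝓝[Ici (-τ)] t] (G (idx t)).1 :=
      Filter.eventuallyEq_of_mem hmem (fun y hy => hagr (idx t) y hy.2)
    have hc : ContinuousWithinAt (G (idx t)).1 (Ici (-τ)) t :=
      ((G (idx t)).2.2.1 t ⟨ht, h1.le⟩).mono_of_mem_nhdsWithin hmem
    exact hc.congr_of_eventuallyEq hev (hagr (idx t) t h1.le)
  have hsol3 : ∀ t ∈ Ici (0 : ℝ), HasDerivWithinAt h (f (h t) (h (t - τ))) (Ici 0) t := by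
    intro t ht
    have h1 : t < b (idx t) := hidx t
    have hd := (G (idx t)).2.2.2 t ⟨ht, h1.le⟩
    have hmem : Icc (0 : ℝ) (b (idx t)) ∈ 𝓝[Ici 0] t := by
      refine mem_nhdsWithin.mpr ⟨Iio (b (idx t)), isOpen_Iio, h1, ?_⟩
      rintro x ⟨hx1, hx2⟩
      exact ⟨hx2, le_of_lt hx1⟩
    have hd2 := hd.mono_of_mem_nhdsWithin hmem
    have hev : h =ᶠ[𝓝[Ici 0] t] (G (idx t)).1 :=
      Filter.eventuallyEq_of_mem hmem (fun y hy => hagr (idx t) y hy.2)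
    have hval1 : h t = (G (idx t)).1 t := hagr (idx t) t h1.le
    have hval2 : h (t - τ) = (G (idx t)).1 (t - τ) := hagr (idx t) _ (by linarith)
    rw [hval1, hval2]
    exact hd2.congr_of_eventuallyEq hev hval1
  refine ⟨h, ⟨hsol1, hsol2, hsol3⟩, ?_⟩
  rintro g ⟨hg1, hg2, hg3⟩ t ht
  have claim : ∀ k : ℕ, ∀ s ∈ Icc (-τ) ((k : ℝ) * τ), g s = h s := by
    intro k
    induction k with
    | zero =>
      intro s hs
      rw [Nat.cast_zero, zero_mul] at hs
      rw [hg1 s hs, hsol1 s hs]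
    | succ n ih =>
      intro s hs
      rw [Nat.cast_succ] at hs
      by_cases hcase : s ≤ (n : ℝ) * τ
      · exact ih s ⟨hs.1, hcase⟩
      · have h0n : (0 : ℝ) ≤ (n : ℝ) * τ := by positivity
        have hsub : Icc ((n : ℝ) * τ) (((n : ℝ) + 1) * τ) ⊆ Ici (-τ) := by
          intro x hx
          have := hx.1
          show -τ ≤ x
          linarith
        have hder : ∀ u ∈ Ico ((n : ℝ) * τ) (((n : ℝ) + 1) * τ),
            HasDerivWithinAt g (f (g u) (h (u - τ))) (Ici u) u := by
          intro u hu
          have hu0 : (0 : ℝ) ≤ u := le_trans h0n hu.1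
          have hd := (hg3 u hu0).mono (fun x (hx : u ≤ x) => le_trans hu0 hx)
          have heq : g (u - τ) = h (u - τ) := by
            apply ih
            constructor
            · show -τ ≤ u - τ; linarith
            · have := hu.2; show u - τ ≤ (n : ℝ) * τ; linarith
          rwa [heq] at hd
        have hderh : ∀ u ∈ Ico ((n : ℝ) * τ) (((n : ℝ) + 1) * τ),
            HasDerivWithinAt h (f (h u) (h (u - τ))) (Ici u) u := by
          intro u hu
          have hu0 : (0 : ℝ) ≤ u := le_trans h0n hu.1
          exact (hsol3 u hu0).mono (fun x (hx : u ≤ x) => le_trans hu0 hx)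
        have key : EqOn g h (Icc ((n : ℝ) * τ) (((n : ℝ) + 1) * τ)) := by
          refine ODE_solution_unique_of_mem_Icc_right
            (v := fun u y => f y (h (u - τ))) (s := fun _ => (univ : Set (EuclideanSpace ℝ (Fin d))))
            (fun u _ => (dde_lip_left hLip _).lipschitzOnWith)
            (hg2.mono hsub) hder (fun _ _ => trivial)
            (hsol2.mono hsub) hderh (fun _ _ => trivial) ?_
          apply ih
          exact ⟨by linarith, le_refl _⟩
        exact key ⟨(not_le.mp hcase).le, hs.2⟩
  have hk : t ≤ ((idx t : ℕ) : ℝ) * τ := by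
    rw [← hbk]
    exact (hidx t).le
  exact claim (idx t) t ⟨ht, hk⟩
end

section
/- Let Φ_t be the flow of an ODE x' = f(x, t) on ℝᵈ with f Lipschitz in x uniformly in t ∈ [0, T], with solutions existing on [0, T]. Then Φ_T : ℝᵈ → ℝᵈ is a homeomorphism onto its image; in particular, the images Φ_T(A) and Φ_T(B) of any two disjoint linked compact sets A (a closed ball) and B (an annulus surrounding it, d = 2) cannot be separated by a hyperplane if Φ_T is, additionally, homotopic through homeomorphisms to the identity. -/
open Real Complex Set


noncomputable def cplx (v : EuclideanSpace ℝ (Fin 2)) : ℂ := (v 0 : ℝ) + (v 1 : ℝ) * Complex.I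

lemma cplx_re (v : EuclideanSpace ℝ (Fin 2)) : (cplx v).re = v 0 := by simp [cplx]
lemma cplx_im (v : EuclideanSpace ℝ (Fin 2)) : (cplx v).im = v 1 := by simp [cplx]

lemma cplx_cont : Continuous cplx := by
  unfold cplx
  exact (Complex.continuous_ofReal.comp (EuclideanSpace.proj (0 : Fin 2)).continuous).add
    ((Complex.continuous_ofReal.comp (EuclideanSpace.proj (1 : Fin 2)).continuous).mul
      continuous_const)

lemma cplx_ne_zero {v : EuclideanSpace ℝ (Fin 2)} (hv : v ≠ 0) : cplx v ≠ 0 := by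
  intro h
  apply hv
  have h1 : (cplx v).re = 0 := by rw [h]; simp
  have h2 : (cplx v).im = 0 := by rw [h]; simp
  rw [cplx_re] at h1; rw [cplx_im] at h2
  ext i
  fin_cases i <;> simpa

noncomputable def gam (r : ℝ) (θ : ℝ) : EuclideanSpace ℝ (Fin 2) :=
  (EuclideanSpace.equiv (Fin 2) ℝ).symm ![r * Real.cos θ, r * Real.sin θ]

lemma gam_apply0 (r θ : ℝ) : gam r θ 0 = r * Real.cos θ := rfl
lemma gam_apply1 (r θ : ℝ) : gam r θ 1 = r * Real.sin θ := rfl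

lemma gam_cont (r : ℝ) : Continuous (gam r) := by
  apply (EuclideanSpace.equiv (Fin 2) ℝ).symm.continuous.comp
  apply continuous_pi
  intro i
  fin_cases i
  · simpa using (by fun_prop : Continuous fun θ => r * Real.cos θ)
  · simpa using (by fun_prop : Continuous fun θ => r * Real.sin θ)

lemma gam_norm (r : ℝ) (hr : 0 ≤ r) (θ : ℝ) : ‖gam r θ‖ = r := by
  rw [EuclideanSpace.norm_eq, Fin.sum_univ_two, gam_apply0, gam_apply1]
  have h : ‖r * Real.cos θ‖^2 + ‖r * Real.sin θ‖^2 = r^2 := by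
    simp only [Real.norm_eq_abs, abs_mul, mul_pow]
    rw [← mul_add, _root_.sq_abs, _root_.sq_abs, _root_.sq_abs, Real.cos_sq_add_sin_sq, mul_one]
  rw [h, Real.sqrt_sq hr]

lemma gam_ne_zero {r : ℝ} (hr : 0 < r) (θ : ℝ) : gam r θ ≠ 0 := by
  intro h
  have := gam_norm r hr.le θ
  rw [h, norm_zero] at this
  linarith

lemma gam_periodic (r : ℝ) : gam r (2 * π) = gam r 0 := by
  unfold gam
  norm_num

lemma angle_coe_sum (n : ℕ) (f : ℕ → ℝ) :
    ((∑ k ∈ Finset.range n, f k : ℝ) : Real.Angle) = ∑ k ∈ Finset.range n, (f k : Real.Angle) :=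
  map_sum (QuotientAddGroup.mk' _) f (Finset.range n)

lemma re_pos_ratio {a b : ℂ} (ha : a ≠ 0) (h : ‖b - a‖ < ‖a‖) :
    0 < (b / a).re := by
  have ha' : 0 < ‖a‖ := norm_pos_iff.mpr ha
  have h1 : ‖b / a - 1‖ < 1 := by
    rw [show b / a - 1 = (b - a) / a by field_simp]
    rw [norm_div, div_lt_one ha']
    exact h
  have h2 : |(b / a - 1).re| ≤ ‖b / a - 1‖ := Complex.abs_re_le_norm _
  have h3 : (b / a - 1).re = (b / a).re - 1 := by simp
  rw [h3] at h2
  have := abs_lt.mp (lt_of_le_of_lt h2 h1)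
  linarith [this.1]

lemma arg_div_of_re_pos {a b : ℂ} (ha : 0 < a.re) (hb : 0 < b.re) :
    (b / a).arg = b.arg - a.arg := by
  have ha0 : a ≠ 0 := by intro h; rw [h] at ha; simp at ha
  have hb0 : b ≠ 0 := by intro h; rw [h] at hb; simp at hb
  have hang : ((b / a).arg : Real.Angle) = (b.arg : Real.Angle) - a.arg :=
    Complex.arg_div_coe_angle hb0 ha0
  have haa : |a.arg| < π / 2 := Complex.abs_arg_lt_pi_div_two_iff.mpr (Or.inl ha)
  have hba : |b.arg| < π / 2 := Complex.abs_arg_lt_pi_div_two_iff.mpr (Or.inl hb)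
  rw [← Real.Angle.coe_sub] at hang
  obtain ⟨k, hk⟩ := Real.Angle.angle_eq_iff_two_pi_dvd_sub.mp hang
  have hpi := Real.pi_pos
  have harg1 : -π < (b / a).arg := Complex.neg_pi_lt_arg _
  have harg2 : (b / a).arg ≤ π := Complex.arg_le_pi _
  have h1 := abs_lt.mp haa
  have h2 := abs_lt.mp hba
  have hk' : |(2:ℝ) * π * k| < 2 * π * 1 := by
    rw [← hk, abs_lt]; constructor <;> linarith
  have habs : |(k:ℝ)| < 1 := by
    have h5 : (2:ℝ) * π * |(k:ℝ)| < 2 * π * 1 := by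
      rwa [abs_mul, abs_of_pos (by positivity : (0:ℝ) < 2*π)] at hk'
    exact lt_of_mul_lt_mul_left h5 (by positivity)
  have hk0 : k = 0 := by
    have h6 := abs_lt.mp habs
    have h3' : (-1:ℤ) < k := by exact_mod_cast h6.1
    have h4' : k < (1:ℤ) := by exact_mod_cast h6.2
    omega
  rw [hk0] at hk; push_cast at hk; linarith

noncomputable def Amap (H : ℝ → EuclideanSpace ℝ (Fin 2) → EuclideanSpace ℝ (Fin 2))
    (r : ℝ) : ℝ × ℝ → ℂ := fun p => cplx (H p.1 (gam r p.2) - H p.1 0)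

lemma no_separation_core
    (T : ℝ) (hT : 0 < T)
    (H : ℝ → EuclideanSpace ℝ (Fin 2) → EuclideanSpace ℝ (Fin 2))
    (hH : Continuous (fun p : ℝ × EuclideanSpace ℝ (Fin 2) => H p.1 p.2))
    (hinj : ∀ t, Function.Injective (H t))
    (hid : H 0 = id)
    (r₂ : ℝ) (hr₂ : 0 < r₂)
    (ℓ : EuclideanSpace ℝ (Fin 2) →L[ℝ] ℝ) (c : ℝ)
    (hin : ℓ (H T 0) < c)
    (hout : ∀ x, ‖x‖ = r₂ → c < ℓ (H T x)) : False := by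
  have hpi := Real.pi_pos
  set A : ℝ × ℝ → ℂ := Amap H r₂ with hAdef
  have hAeq : ∀ p : ℝ × ℝ, A p = cplx (H p.1 (gam r₂ p.2) - H p.1 0) := fun p => rfl
  have hAcont : Continuous A := by
    apply cplx_cont.comp
    exact (hH.comp (continuous_fst.prodMk ((gam_cont r₂).comp continuous_snd))).sub
      (hH.comp (continuous_fst.prodMk continuous_const))
  have hA0 : ∀ p : ℝ × ℝ, A p ≠ 0 := by
    intro p
    apply cplx_ne_zero
    rw [sub_ne_zero]
    intro h
    exact gam_ne_zero hr₂ p.2 (hinj p.1 h)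
  -- compact set and minimum of |A|
  have hQc : IsCompact (Icc (0:ℝ) T ×ˢ Icc (0:ℝ) (2*π)) := isCompact_Icc.prod isCompact_Icc
  obtain ⟨p₀, hp₀Q, hp₀⟩ := hQc.exists_isMinOn
    ⟨(0,0), by constructor <;> constructor <;> [skip; exact hT.le; skip; positivity] <;> norm_num⟩
    ((continuous_norm.comp hAcont).continuousOn)
  set m := ‖A p₀‖ with hmdef
  have hm : 0 < m := norm_pos_iff.mpr (hA0 p₀)
  have hmle : ∀ p ∈ Icc (0:ℝ) T ×ˢ Icc (0:ℝ) (2*π), m ≤ ‖A p‖ :=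
    fun p hp => hp₀ hp
  -- uniform continuity
  have hu := hQc.uniformContinuousOn_of_continuous hAcont.continuousOn
  rw [Metric.uniformContinuousOn_iff] at hu
  obtain ⟨δ, hδ, hud⟩ := hu m hm
  -- choice of n
  obtain ⟨n, hn⟩ := exists_nat_gt (max (2*π/δ) 2)
  have hn2 : (2:ℝ) < n := lt_of_le_of_lt (le_max_right _ _) hn
  have hnpos : 0 < (n:ℝ) := by linarith
  have hnne : (n:ℝ) ≠ 0 := ne_of_gt hnpos
  have hnδ : 2*π/n < δ := by
    rw [div_lt_iff₀ hnpos]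
    have h1 : 2*π/δ < n := lt_of_le_of_lt (le_max_left _ _) hn
    rw [div_lt_iff₀ hδ] at h1
    linarith
  set θk : ℕ → ℝ := fun k => 2*π*k/n with hθdef
  have hθmem : ∀ k, k ≤ n → θk k ∈ Icc (0:ℝ) (2*π) := by
    intro k hk
    constructor
    · positivity
    · rw [div_le_iff₀ hnpos]
      have : (k:ℝ) ≤ n := by exact_mod_cast hk
      nlinarith
  have hθdiff : ∀ k : ℕ, θk (k+1) - θk k = 2*π/n := by
    intro k
    rw [hθdef]
    push_cast
    field_simp
    ring
  have hθ0 : θk 0 = 0 := by simp only [hθdef]; norm_num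
  have hθn : θk n = 2*π := by
    simp only [hθdef]
    rw [mul_div_assoc, div_self hnne, mul_one]
  have hAper : ∀ s : ℝ, A (s, θk n) = A (s, θk 0) := by
    intro s
    rw [hAeq, hAeq]
    simp only [hθ0, hθn]
    rw [gam_periodic]
  -- positivity of real part of ratios
  have hre : ∀ s ∈ Icc (0:ℝ) T, ∀ k, k < n → 0 < (A (s, θk (k+1)) / A (s, θk k)).re := by
    intro s hs k hk
    apply re_pos_ratio (hA0 _)
    have hq : (s, θk (k+1)) ∈ Icc (0:ℝ) T ×ˢ Icc (0:ℝ) (2*π) := ⟨hs, hθmem _ hk⟩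
    have hp : (s, θk k) ∈ Icc (0:ℝ) T ×ˢ Icc (0:ℝ) (2*π) := ⟨hs, hθmem _ (le_of_lt hk)⟩
    have hdist : dist ((s, θk (k+1)) : ℝ × ℝ) ((s, θk k) : ℝ × ℝ) < δ := by
      rw [Prod.dist_eq]
      apply max_lt
      · simpa using hδ
      · rw [Real.dist_eq, show θk (k+1) - θk k = 2*π/n from hθdiff k] at *
        rw [abs_of_pos (by positivity)]
        exact hnδ
    have := hud _ hq _ hp hdist
    rw [Complex.dist_eq] at this
    exact lt_of_lt_of_le this (hmle _ hp)
  set W : ℝ → ℝ := fun s => ∑ k ∈ Finset.range n, (A (s, θk (k+1)) / A (s, θk k)).arg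
    with hWdef
  -- continuity of W
  have hWcont : ContinuousOn W (Icc (0:ℝ) T) := by
    apply continuousOn_finset_sum
    intro k hk
    rw [Finset.mem_range] at hk
    intro s hs
    have h1 : Continuous (fun s : ℝ => A (s, θk (k+1))) :=
      hAcont.comp (continuous_id.prodMk continuous_const)
    have h2 : Continuous (fun s : ℝ => A (s, θk k)) :=
      hAcont.comp (continuous_id.prodMk continuous_const)
    have hρc : Continuous (fun s : ℝ => A (s, θk (k+1)) / A (s, θk k)) :=
      h1.div h2 (fun s => hA0 _)
    exact ContinuousAt.comp_continuousWithinAt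
      (g := Complex.arg) (f := fun s : ℝ => A (s, θk (k+1)) / A (s, θk k))
      (Complex.continuousAt_arg
        (Complex.mem_slitPlane_iff.mpr (Or.inl (hre s hs k hk))))
      hρc.continuousWithinAt
  -- W s is a multiple of 2π
  have hWint : ∀ s : ℝ, ∃ j : ℤ, W s = 2*π*j := by
    intro s
    have hzero : ((W s : ℝ) : Real.Angle) = 0 := by
      simp only [hWdef]
      rw [angle_coe_sum]
      have hterm : ∀ k ∈ Finset.range n,
          ((A (s, θk (k+1)) / A (s, θk k)).arg : Real.Angle) =
            ((A (s, θk (k+1))).arg : Real.Angle) - ((A (s, θk k)).arg : Real.Angle) :=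
        fun k _ => Complex.arg_div_coe_angle (hA0 _) (hA0 _)
      rw [Finset.sum_congr rfl hterm]
      rw [Finset.sum_range_sub (fun k => ((A (s, θk k)).arg : Real.Angle))]
      rw [hAper s, sub_self]
    obtain ⟨j, hj⟩ := (AddCircle.coe_eq_zero_iff (2*π)).mp hzero
    refine ⟨j, ?_⟩
    rw [← hj]
    push_cast [zsmul_eq_mul]
    ring
  -- W 0 = 2π
  have hA0θ : ∀ θ : ℝ, A (0, θ) = (r₂:ℂ) * Complex.exp (θ * Complex.I) := by
    intro θ
    rw [hAeq]
    simp only [hid, id_eq, sub_zero]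
    rw [Complex.exp_mul_I, ← Complex.ofReal_cos, ← Complex.ofReal_sin]
    unfold cplx
    rw [gam_apply0, gam_apply1]
    push_cast
    ring
  have hW0 : W 0 = 2*π := by
    simp only [hWdef]
    have hterm : ∀ k ∈ Finset.range n,
        (A ((0:ℝ), θk (k+1)) / A ((0:ℝ), θk k)).arg = 2*π/n := by
      intro k _
      rw [hA0θ, hA0θ]
      rw [mul_div_mul_left _ _ (by exact_mod_cast ne_of_gt hr₂ : (r₂:ℂ) ≠ 0)]
      rw [← Complex.exp_sub]
      rw [show ((θk (k+1) : ℝ) : ℂ) * Complex.I - ((θk k : ℝ) : ℂ) * Complex.I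
          = ((2*π/n : ℝ) : ℂ) * Complex.I by
        rw [← sub_mul, ← Complex.ofReal_sub, hθdiff k]]
      rw [Complex.exp_mul_I]
      have hx : 0 < 2*π/(n:ℝ) := by positivity
      exact Complex.arg_cos_add_sin_mul_I ⟨by linarith, by
        rw [div_le_iff₀ hnpos]; nlinarith⟩
    rw [Finset.sum_congr rfl hterm, Finset.sum_const, Finset.card_range]
    rw [nsmul_eq_mul]
    field_simp
  -- W T = 0
  have hWT : W T = 0 := by
    set a := ℓ (EuclideanSpace.single (0 : Fin 2) (1:ℝ)) with hadef
    set b := ℓ (EuclideanSpace.single (1 : Fin 2) (1:ℝ)) with hbdef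
    set u : ℂ := (a:ℂ) - (b:ℂ)*Complex.I with hudef
    have hure : u.re = a := by simp [hudef]
    have huim : u.im = -b := by simp [hudef]
    have hmulre : ∀ z : ℂ, (u * z).re = a * z.re + b * z.im := by
      intro z
      rw [Complex.mul_re, hure, huim]
      ring
    have hdecomp : ∀ v : EuclideanSpace ℝ (Fin 2), ℓ v = a * v 0 + b * v 1 := by
      intro v
      have hv : v = v 0 • EuclideanSpace.single (0:Fin 2) (1:ℝ)
          + v 1 • EuclideanSpace.single (1:Fin 2) (1:ℝ) := by
        ext i
        fin_cases i <;> simp [EuclideanSpace.single_apply]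
      calc ℓ v = ℓ (v 0 • EuclideanSpace.single (0:Fin 2) (1:ℝ)
          + v 1 • EuclideanSpace.single (1:Fin 2) (1:ℝ)) := by rw [← hv]
        _ = a * v 0 + b * v 1 := by
            rw [map_add, map_smul, map_smul, smul_eq_mul, smul_eq_mul, ← hadef, ← hbdef]
            ring
    have hζre : ∀ k, k ≤ n → 0 < (u * A (T, θk k)).re := by
      intro k hk
      rw [hmulre, hAeq, cplx_re, cplx_im]
      have hsub0 : (H T (gam r₂ (θk k)) - H T 0) 0
          = H T (gam r₂ (θk k)) 0 - H T 0 0 := rfl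
      have hsub1 : (H T (gam r₂ (θk k)) - H T 0) 1
          = H T (gam r₂ (θk k)) 1 - H T 0 1 := rfl
      rw [hsub0, hsub1]
      have hkey : a * (H T (gam r₂ (θk k)) 0 - H T 0 0) + b * (H T (gam r₂ (θk k)) 1 - H T 0 1)
          = ℓ (H T (gam r₂ (θk k))) - ℓ (H T 0) := by
        rw [hdecomp (H T (gam r₂ (θk k))), hdecomp (H T 0)]
        ring
      rw [hkey]
      have h1 := hout (gam r₂ (θk k)) (gam_norm r₂ hr₂.le _)
      linarith
    have hu0 : u ≠ 0 := by
      intro h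
      have := hζre 0 (Nat.zero_le n)
      rw [h, zero_mul] at this
      simp at this
    simp only [hWdef]
    have hterm : ∀ k ∈ Finset.range n,
        (A (T, θk (k+1)) / A (T, θk k)).arg
          = (u * A (T, θk (k+1))).arg - (u * A (T, θk k)).arg := by
      intro k hk
      rw [Finset.mem_range] at hk
      rw [show A (T, θk (k+1)) / A (T, θk k)
          = (u * A (T, θk (k+1))) / (u * A (T, θk k)) from (mul_div_mul_left _ _ hu0).symm]
      exact arg_div_of_re_pos (hζre k (le_of_lt hk)) (hζre (k+1) hk)
    rw [Finset.sum_congr rfl hterm]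
    rw [Finset.sum_range_sub (fun k => (u * A (T, θk k)).arg)]
    rw [hAper T, sub_self]
  -- intermediate value theorem
  have hmem : π ∈ Icc (W T) (W 0) := by
    rw [hWT, hW0]
    constructor <;> linarith
  obtain ⟨s, _, hWs⟩ := intermediate_value_Icc' hT.le hWcont hmem
  obtain ⟨j, hj⟩ := hWint s
  rw [hWs] at hj
  have hj' : π = π * (2*(j:ℝ)) := by linear_combination hj
  have h0 : π * 1 = π * (2*(j:ℝ)) := by rw [mul_one]; linarith [hj']
  have h1 : (1:ℝ) = 2*(j:ℝ) := mul_left_cancel₀ (ne_of_gt hpi) h0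
  have h2 : (2*j : ℤ) = 1 := by exact_mod_cast h1.symm
  omega

section ODE

variable {E : Type*} [NormedAddCommGroup E] [NormedSpace ℝ E]

lemma flow_dist_le
    (f : E → ℝ → E) (K : NNReal) (hLip : ∀ t, LipschitzWith K fun x => f x t)
    (T : ℝ) (hT : 0 < T)
    (sol : E → ℝ → E)
    (hinit : ∀ x, sol x 0 = x)
    (hsol : ∀ x, ∀ t ∈ Set.Icc 0 T,
      HasDerivWithinAt (sol x) (f (sol x t) t) (Set.Icc 0 T) t)
    (x y : E) :
    dist (sol x T) (sol y T) ≤ dist x y * Real.exp (K * T) := by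
  have hcont : ∀ z : E, ContinuousOn (sol z) (Icc 0 T) :=
    fun z t ht => (hsol z t ht).continuousWithinAt
  have hderiv : ∀ z : E, ∀ t ∈ Ico (0:ℝ) T,
      HasDerivWithinAt (sol z) ((fun t y => f y t) t (sol z t)) (Ici t) t := by
    intro z t ht
    exact (hsol z t ⟨ht.1, ht.2.le⟩).mono_of_mem_nhdsWithin (Icc_mem_nhdsGE_of_mem ht)
  have := dist_le_of_trajectories_ODE (v := fun t y => f y t) (K := K)
    (fun t => hLip t) (hcont x) (hderiv x) (hcont y) (hderiv y)
    (by rw [hinit, hinit]) T ⟨hT.le, le_refl T⟩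
  simpa using this

lemma flow_dist_ge
    (f : E → ℝ → E) (K : NNReal) (hLip : ∀ t, LipschitzWith K fun x => f x t)
    (T : ℝ) (hT : 0 < T)
    (sol : E → ℝ → E)
    (hinit : ∀ x, sol x 0 = x)
    (hsol : ∀ x, ∀ t ∈ Set.Icc 0 T,
      HasDerivWithinAt (sol x) (f (sol x t) t) (Set.Icc 0 T) t)
    (x y : E) :
    dist x y ≤ dist (sol x T) (sol y T) * Real.exp (K * T) := by
  -- time-reversed flow
  set g : E → ℝ → E := fun z t => sol z (T - t) with hg
  have hgderiv : ∀ z : E, ∀ t ∈ Icc (0:ℝ) T,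
      HasDerivWithinAt (g z) (-(f (g z t) (T - t))) (Icc 0 T) t := by
    intro z t ht
    have hmem : T - t ∈ Icc (0:ℝ) T := ⟨by linarith [ht.2], by linarith [ht.1]⟩
    have houter := hsol z (T - t) hmem
    have hinner : HasDerivWithinAt (fun t : ℝ => T - t) (-1 : ℝ) (Icc 0 T) t :=
      ((hasDerivAt_id t).const_sub T).hasDerivWithinAt
    have hmaps : MapsTo (fun t : ℝ => T - t) (Icc 0 T) (Icc 0 T) := by
      intro u hu
      simp only [mem_Icc] at hu ⊢
      constructor <;> linarith
    have := HasDerivWithinAt.scomp t houter hinner hmaps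
    simpa [hg, Function.comp_def] using this
  have hgcont : ∀ z : E, ContinuousOn (g z) (Icc 0 T) :=
    fun z t ht => (hgderiv z t ht).continuousWithinAt
  have hgderiv' : ∀ z : E, ∀ t ∈ Ico (0:ℝ) T,
      HasDerivWithinAt (g z) ((fun t y => -(f y (T - t))) t (g z t)) (Ici t) t := by
    intro z t ht
    exact (hgderiv z t ⟨ht.1, ht.2.le⟩).mono_of_mem_nhdsWithin (Icc_mem_nhdsGE_of_mem ht)
  have hLip' : ∀ t, LipschitzWith K fun y : E => -(f y (T - t)) :=
    fun t => (hLip (T - t)).neg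
  have := dist_le_of_trajectories_ODE (v := fun t y => -(f y (T - t))) (K := K)
    hLip' (hgcont x) (hgderiv' x) (hgcont y) (hgderiv' y)
    (le_refl _) T ⟨hT.le, le_refl T⟩
  have h2 : g x T = x := by rw [hg]; simp [hinit]
  have h3 : g y T = y := by rw [hg]; simp [hinit]
  have h4 : g x 0 = sol x T := by rw [hg]; simp
  have h5 : g y 0 = sol y T := by rw [hg]; simp
  rw [h2, h3, h4, h5, sub_zero] at this
  exact this

end ODE

/-- The time-`T` flow map of a Lipschitz ODE on `ℝ²` is a
homeomorphism onto its image (an embedding); moreover, if it is homotopic through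
injective continuous maps (homeomorphisms onto their images) to the identity, then
the images of a closed ball and of an annulus surrounding it cannot be separated
by a hyperplane. -/
theorem ode_flow_embedding_no_separation
    (f : EuclideanSpace ℝ (Fin 2) → ℝ → EuclideanSpace ℝ (Fin 2))
    (K : NNReal) (hLip : ∀ t, LipschitzWith K fun x => f x t)
    (hcont : ∀ x, Continuous (f x))
    (T : ℝ) (hT : 0 < T)
    (sol : EuclideanSpace ℝ (Fin 2) → ℝ → EuclideanSpace ℝ (Fin 2))
    (hinit : ∀ x, sol x 0 = x)
    (hsol : ∀ x, ∀ t ∈ Set.Icc 0 T,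
      HasDerivWithinAt (sol x) (f (sol x t) t) (Set.Icc 0 T) t)
    (Φ : EuclideanSpace ℝ (Fin 2) → EuclideanSpace ℝ (Fin 2))
    (hΦ : Φ = fun x => sol x T)
    (r₁ r₂ r₃ : ℝ) (h01 : 0 < r₁) (h12 : r₁ < r₂) (h23 : r₂ < r₃) :
    Topology.IsEmbedding Φ ∧
      ((∃ H : ℝ → EuclideanSpace ℝ (Fin 2) → EuclideanSpace ℝ (Fin 2),
          Continuous (fun p : ℝ × EuclideanSpace ℝ (Fin 2) => H p.1 p.2) ∧
          H 0 = id ∧ H T = Φ ∧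
          ∀ t, Function.Injective (H t) ∧ Continuous (H t)) →
        ¬ ∃ (ℓ : EuclideanSpace ℝ (Fin 2) →L[ℝ] ℝ) (c : ℝ),
          (∀ x ∈ Metric.closedBall (0 : EuclideanSpace ℝ (Fin 2)) r₁, ℓ (Φ x) < c) ∧
          (∀ x : EuclideanSpace ℝ (Fin 2), r₂ ≤ ‖x‖ → ‖x‖ ≤ r₃ → c < ℓ (Φ x))) := by
  constructor
  · -- embedding via bi-Lipschitz estimates
    set C := Real.toNNReal (Real.exp (K * T)) with hC
    have hCcoe : (C : ℝ) = Real.exp (K * T) := Real.coe_toNNReal _ (Real.exp_nonneg _)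
    have hlip : LipschitzWith C Φ := by
      apply LipschitzWith.of_dist_le_mul
      intro x y
      rw [hΦ, hCcoe, mul_comm]
      exact flow_dist_le f K hLip T hT sol hinit hsol x y
    have hanti : AntilipschitzWith C Φ := by
      apply AntilipschitzWith.of_le_mul_dist
      intro x y
      rw [hΦ, hCcoe, mul_comm]
      exact flow_dist_ge f K hLip T hT sol hinit hsol x y
    exact (hanti.isUniformEmbedding hlip.uniformContinuous).isEmbedding
  · rintro ⟨H, hHc, h0, hTeq, hprops⟩ ⟨ℓ, c, hball, hann⟩
    refine no_separation_core T hT H hHc (fun t => (hprops t).1) h0 r₂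
      (lt_trans h01 h12) ℓ c ?_ ?_
    · rw [hTeq]
      exact hball 0 (by simp [Metric.mem_closedBall]; exact h01.le)
    · intro x hx
      rw [hTeq]
      exact hann x (le_of_eq hx.symm) (by rw [hx]; exact h23.le)
end

section
/- Let F : ℝⁿ → ℝⁿ be continuous and suppose a neural network Ĝ satisfies sup_x ‖Ĝ(x) − (F(x) − x)/T‖ ≤ ε. Then the NDDE h'(t) = Ĝ(h(t−τ)), h ≡ x on [−τ, 0], with τ = T, satisfies ‖h(T) − F(x)‖ ≤ T·ε for every x. -/
/-- quantitative universal approximation for NDDEs: if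
`‖Ĝ(x) − (F(x) − x)/T‖ ≤ ε` for all `x`, then the NDDE `h'(t) = Ĝ(h(t−T))` with
constant history `x` satisfies `‖h(T) − F(x)‖ ≤ T·ε`. -/
theorem ndde_approximates_F {n : ℕ}
    (F G : EuclideanSpace ℝ (Fin n) → EuclideanSpace ℝ (Fin n)) (hF : Continuous F)
    (T ε : ℝ) (hT : 0 < T) (hε : 0 ≤ ε)
    (hG : ∀ x, ‖G x - (1 / T) • (F x - x)‖ ≤ ε)
    (h : EuclideanSpace ℝ (Fin n) → ℝ → EuclideanSpace ℝ (Fin n))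
    (hist : ∀ x, ∀ t ≤ (0 : ℝ), h x t = x)
    (hdde : ∀ x, ∀ t ∈ Set.Ici (0 : ℝ),
      HasDerivWithinAt (h x) (G (h x (t - T))) (Set.Ici 0) t) :
    ∀ x, ‖h x T - F x‖ ≤ T * ε := by
  intro x
  -- the auxiliary function g t = h x t - t • G x has derivative 0 on [0,T]
  set g : ℝ → EuclideanSpace ℝ (Fin n) := fun t => h x t - t • G x with hg
  have hderiv : ∀ t ∈ Set.Icc (0:ℝ) T, HasDerivWithinAt g 0 (Set.Icc 0 T) t := by
    intro t ht
    have h1 : HasDerivWithinAt (h x) (G (h x (t - T))) (Set.Icc 0 T) t :=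
      (hdde x t ht.1).mono Set.Icc_subset_Ici_self
    have hx : h x (t - T) = x := hist x (t - T) (by linarith [ht.2])
    rw [hx] at h1
    have h2 : HasDerivWithinAt (fun s : ℝ => s • G x) (G x) (Set.Icc 0 T) t := by
      simpa using (hasDerivWithinAt_id t (Set.Icc 0 T)).smul_const (G x)
    have h3 := h1.sub h2; rw [sub_self] at h3; exact h3
  have key : ‖g T - g 0‖ ≤ 0 * (T - 0) := by
    apply norm_image_sub_le_of_norm_deriv_le_segment' hderiv
    intro t ht; simp
    exact Set.right_mem_Icc.mpr hT.le
  have hgeq : g T = g 0 := by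
    have : ‖g T - g 0‖ ≤ 0 := by simpa using key
    have := le_antisymm this (norm_nonneg _)
    simpa [sub_eq_zero] using norm_eq_zero.mp this
  have hT0 : h x T = x + T • G x := by
    have h0 : h x 0 = x := hist x 0 le_rfl
    have : h x T - T • G x = x := by simpa [hg, h0] using hgeq
    linear_combination (norm := module) this
  have : h x T - F x = T • (G x - (1 / T) • (F x - x)) := by
    rw [hT0, smul_sub, smul_smul, mul_one_div, div_self hT.ne']
    module
  rw [this, norm_smul, Real.norm_eq_abs, abs_of_pos hT]
  exact mul_le_mul_of_nonneg_left (hG x) hT.le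
end
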